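/- arXiv:2002.01347 — 2 statements merged into one kernel-verified Lean document; each statement's English description precedes it below -/
import Mathlib

section
/- If G is a connected 6-γ_tR-edge-supercritical graph, then 2 ≤ diam(G) ≤ 3. -/
open SimpleGraph Finset

variable {V : Type*}

/-- `S` is a dominating set of `G`. -/
def Dominating (G : SimpleGraph V) (S : Finset V) : Prop :=
  ∀ v, v ∉ S → ∃ u ∈ S, G.Adj u v

/-- `S` is a total dominating set of `G`. -/
def TotalDominating (G : SimpleGraph V) (S : Finset V) : Prop :=
  ∀ v : V, ∃ u ∈ S, G.Adj u v

/-- The domination number γ(G). -/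
noncomputable def gamma (G : SimpleGraph V) [Fintype V] : ℕ :=
  sInf {n | ∃ S : Finset V, Dominating G S ∧ S.card = n}

/-- The total domination number γ_t(G). -/
noncomputable def gammaT (G : SimpleGraph V) [Fintype V] : ℕ :=
  sInf {n | ∃ S : Finset V, TotalDominating G S ∧ S.card = n}

/-- `f` is a total Roman dominating function on `G`. -/
def IsTRDF (G : SimpleGraph V) (f : V → ℕ) : Prop :=
  (∀ v, f v ≤ 2) ∧ (∀ v, f v = 0 → ∃ u, G.Adj u v ∧ f u = 2) ∧
    (∀ v, 0 < f v → ∃ u, G.Adj u v ∧ 0 < f u)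

/-- The total Roman domination number γ_tR(G). -/
noncomputable def gammaTR (G : SimpleGraph V) [Fintype V] : ℕ :=
  sInf {n | ∃ f : V → ℕ, IsTRDF G f ∧ ∑ v, f v = n}

/-- The graph `G + uv`. -/
def addEdge (G : SimpleGraph V) (u v : V) : SimpleGraph V :=
  G ⊔ SimpleGraph.fromEdgeSet {s(u, v)}

/-- The graph `G - uv`. -/
def deleteEdge (G : SimpleGraph V) (u v : V) : SimpleGraph V :=
  G.deleteEdges {s(u, v)}

/-- `G` has no isolated vertices. -/
def NoIsolated (G : SimpleGraph V) : Prop := ∀ v : V, ∃ u, G.Adj u v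

/-- The degree of `v` in `G`. -/
noncomputable def degreeN (G : SimpleGraph V) (v : V) : ℕ :=
  {u | G.Adj v u}.ncard

set_option linter.unusedSectionVars false

section helpers
open SimpleGraph Finset
variable {V : Type*}

private lemma addEdge_adj' (G : SimpleGraph V) (x y u v : V) :
    (addEdge G x y).Adj u v ↔ G.Adj u v ∨ (u ≠ v ∧ ((u = x ∧ v = y) ∨ (u = y ∧ v = x))) := by
  simp [addEdge, Sym2.eq_iff]
  tauto

private lemma exists_adj (G : SimpleGraph V) (hconn : G.Connected) {x y : V} (hxy : x ≠ y) :
    ∃ w, G.Adj x w := by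
  obtain ⟨p⟩ := hconn.preconnected x y
  cases p with
  | nil => exact absurd rfl hxy
  | cons h p => exact ⟨_, h⟩

private lemma walk_split {G : SimpleGraph V} :
    ∀ {x y : V} (p : G.Walk x y) (k : ℕ), k ≤ p.length →
    ∃ (z : V) (q : G.Walk x z) (r : G.Walk z y), q.length = k ∧ r.length = p.length - k := by
  intro x y p
  induction p with
  | nil => intro k hk; simp at hk; subst hk; exact ⟨_, .nil, .nil, rfl, rfl⟩
  | cons h p ih =>
    intro k hk
    cases k with
    | zero => exact ⟨_, .nil, .cons h p, rfl, rfl⟩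
    | succ k =>
      simp only [SimpleGraph.Walk.length_cons] at hk
      obtain ⟨z, q, r, hq, hr⟩ := ih k (by omega)
      exact ⟨z, .cons h q, r, by simp [hq], by simp only [SimpleGraph.Walk.length_cons]; omega⟩

private lemma exists_dist_eq' (G : SimpleGraph V) (hconn : G.Connected) (x y : V) (k : ℕ)
    (hk : k ≤ G.dist x y) : ∃ z, G.dist x z = k := by
  obtain ⟨p, hp⟩ := hconn.exists_walk_length_eq_dist x y
  obtain ⟨z, q, r, hq, hr⟩ := walk_split p k (by omega)
  refine ⟨z, le_antisymm (hq ▸ G.dist_le q) ?_⟩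
  have h1 := hconn.dist_triangle (u := x) (v := z) (w := y)
  have h2 := G.dist_le r
  omega

private lemma weight4_cases [Fintype V] (f : V → ℕ) (hle : ∀ v, f v ≤ 2)
    (hsum : ∑ v, f v = 4) :
    (∃ a b, a ≠ b ∧ f a = 2 ∧ f b = 2 ∧ ∀ v, f v ≠ 0 → v = a ∨ v = b) ∨
    (∃ a b c, a ≠ b ∧ a ≠ c ∧ b ≠ c ∧ f a = 2 ∧ f b = 1 ∧ f c = 1 ∧
      ∀ v, f v ≠ 0 → v = a ∨ v = b ∨ v = c) ∨
    (∀ v, f v ≠ 2) := by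
  classical
  set A := univ.filter (fun v => f v = 2) with hA
  set B := univ.filter (fun v => f v = 1) with hB
  have hmemA : ∀ v, v ∈ A ↔ f v = 2 := by intro v; simp [hA]
  have hmemB : ∀ v, v ∈ B ↔ f v = 1 := by intro v; simp [hB]
  have key : ∑ v, f v = 2 * A.card + B.card := by
    have h1 : ∀ v ∈ (univ : Finset V),
        f v = 2 * (if f v = 2 then 1 else 0) + (if f v = 1 then 1 else 0) := by
      intro v _
      have := hle v
      split_ifs <;> omega
    rw [Finset.sum_congr rfl h1, Finset.sum_add_distrib, ← Finset.mul_sum]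
    congr 1
    · congr 1
      simp [Finset.sum_boole]; rfl
    · simp [Finset.sum_boole]; rfl
  rw [hsum] at key
  have hAle : A.card ≤ 2 := by omega
  interval_cases h : A.card
  · right; right
    intro v hv
    have : v ∈ A := (hmemA v).2 hv
    rw [Finset.card_eq_zero] at h
    simp [h] at this
  · right; left
    have hBc : B.card = 2 := by omega
    obtain ⟨a, ha⟩ := Finset.card_eq_one.1 h
    obtain ⟨b, c, hbc, hB2⟩ := Finset.card_eq_two.1 hBc
    have hfa : f a = 2 := (hmemA a).1 (by simp [ha])
    have hfb : f b = 1 := (hmemB b).1 (by simp [hB2])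
    have hfc : f c = 1 := (hmemB c).1 (by simp [hB2])
    refine ⟨a, b, c, by intro e; rw [e, hfb] at hfa; omega,
      by intro e; rw [e, hfc] at hfa; omega, hbc, hfa, hfb, hfc, ?_⟩
    intro v hv
    have := hle v
    have h2 : f v = 1 ∨ f v = 2 := by omega
    rcases h2 with h2 | h2
    · have : v ∈ B := (hmemB v).2 h2
      rw [hB2] at this; simp at this; tauto
    · have : v ∈ A := (hmemA v).2 h2
      rw [ha] at this; simp at this; tauto
  · left
    have hBc : B.card = 0 := by omega
    obtain ⟨a, b, hab, hA2⟩ := Finset.card_eq_two.1 h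
    have hfa : f a = 2 := (hmemA a).1 (by simp [hA2])
    have hfb : f b = 2 := (hmemA b).1 (by simp [hA2])
    refine ⟨a, b, hab, hfa, hfb, ?_⟩
    intro v hv
    have := hle v
    have h2 : f v = 1 ∨ f v = 2 := by omega
    rcases h2 with h2 | h2
    · have : v ∈ B := (hmemB v).2 h2
      rw [Finset.card_eq_zero] at hBc
      simp [hBc] at this
    · have : v ∈ A := (hmemA v).2 h2
      rw [hA2] at this; simp at this; tauto

section subs
variable [Fintype V] {G H : SimpleGraph V} {x y : V} {f : V → ℕ}

private lemma sub_a (hconn : G.Connected) {a b : V}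
    (hadj : ∀ u v, H.Adj u v ↔ G.Adj u v ∨ (u ≠ v ∧ ((u = x ∧ v = y) ∨ (u = y ∧ v = x))))
    (hdom : ∀ v, f v = 0 → ∃ u, H.Adj u v ∧ f u = 2)
    (hsupp : ∀ v, f v ≠ 0 → v = a ∨ v = b)
    (hfa : f a = 2) (hfb : f b = 2) (hGab : G.Adj a b)
    (hfx : f x = 2) (hfy : f y = 0) (hd : 4 ≤ G.dist x y) : False := by
  have hxy : x ≠ y := by rintro rfl; rw [SimpleGraph.dist_self] at hd; omega
  obtain ⟨t, hft, hxt, hsupp'⟩ : ∃ t, f t = 2 ∧ G.Adj x t ∧ ∀ v, f v ≠ 0 → v = x ∨ v = t := by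
    rcases hsupp x (by omega) with h | h
    · exact ⟨b, hfb, by rw [h]; exact hGab, fun v hv => by
        rcases hsupp v hv with h' | h'
        · exact Or.inl (by rw [h', h])
        · exact Or.inr h'⟩
    · exact ⟨a, hfa, by rw [h]; exact hGab.symm, fun v hv => by
        rcases hsupp v hv with h' | h'
        · exact Or.inr h'
        · exact Or.inl (by rw [h', h])⟩
  have hdxt : G.dist x t = 1 := dist_eq_one_iff_adj.2 hxt
  obtain ⟨w, hw⟩ := exists_adj G hconn hxy.symm
  have hfw : f w = 0 := by
    by_contra hfw
    rcases hsupp' w hfw with h | h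
    · have : G.dist x y = 1 := dist_eq_one_iff_adj.2 (by rw [← h]; exact hw.symm)
      omega
    · have h1 : G.dist t y = 1 := dist_eq_one_iff_adj.2 (by rw [← h]; exact hw.symm)
      have h2 := hconn.dist_triangle (u := x) (v := t) (w := y)
      omega
  obtain ⟨u, huw, hfu⟩ := hdom w hfw
  have hwx : w ≠ x := fun h => by rw [h, hfx] at hfw; omega
  have hwy : w ≠ y := hw.ne'
  have hG : G.Adj u w := by
    rcases (hadj u w).1 huw with h | ⟨_, ⟨h1, h2⟩ | ⟨h1, h2⟩⟩
    · exact h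
    · exact absurd h2 hwy
    · exact absurd h2 hwx
  have h2 : G.dist w y = 1 := dist_eq_one_iff_adj.2 hw.symm
  rcases hsupp' u (by omega) with h | h
  · have h1 : G.dist x w = 1 := dist_eq_one_iff_adj.2 (by rw [← h]; exact hG)
    have h3 := hconn.dist_triangle (u := x) (v := w) (w := y)
    omega
  · have h1 : G.dist t w = 1 := dist_eq_one_iff_adj.2 (by rw [← h]; exact hG)
    have h3 := hconn.dist_triangle (u := x) (v := t) (w := w)
    have h4 := hconn.dist_triangle (u := x) (v := w) (w := y)
    omega

private lemma sub_b1 (hconn : G.Connected) {b c : V}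
    (hmin : ∀ g : V → ℕ, IsTRDF G g → 6 ≤ ∑ v, g v)
    (hadj : ∀ u v, H.Adj u v ↔ G.Adj u v ∨ (u ≠ v ∧ ((u = x ∧ v = y) ∨ (u = y ∧ v = x))))
    (hle : ∀ v, f v ≤ 2)
    (hdom : ∀ v, f v = 0 → ∃ u, H.Adj u v ∧ f u = 2)
    (hpos : ∀ v, 0 < f v → ∃ u, H.Adj u v ∧ 0 < f u)
    (hsum : ∑ v, f v = 4)
    (hsupp : ∀ v, f v ≠ 0 → v = x ∨ v = b ∨ v = c)
    (hfx : f x = 2) (hfb : f b = 1) (hfc : f c = 1)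
    (hfy : f y = 0) (hd : 4 ≤ G.dist x y) : False := by
  classical
  have hxy : x ≠ y := by rintro rfl; rw [SimpleGraph.dist_self] at hd; omega
  have hux2 : ∀ u, f u = 2 → u = x := by
    intro u hu
    rcases hsupp u (by omega) with h | h | h
    · exact h
    · rw [h, hfb] at hu; omega
    · rw [h, hfc] at hu; omega
  by_cases hex : ∃ w, G.Adj y w ∧ 0 < f w
  · obtain ⟨w, hyw, hfw⟩ := hex
    set g := Function.update f y 1 with hg
    have hgy : g y = 1 := by simp [hg]
    have hgne : ∀ v, v ≠ y → g v = f v := fun v hv => Function.update_of_ne hv _ _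
    have hsumg : ∑ v, g v = 5 := by
      have h1 : ∑ v, g v = 1 + ∑ v ∈ univ \ {y}, f v :=
        Finset.sum_update_of_mem (Finset.mem_univ y) f 1
      have h2 : f y + ∑ v ∈ (univ : Finset V).erase y, f v = ∑ v, f v :=
        Finset.add_sum_erase _ f (Finset.mem_univ y)
      rw [← Finset.erase_eq] at h1
      omega
    have hTR : IsTRDF G g := by
      refine ⟨?_, ?_, ?_⟩
      · intro v
        by_cases hv : v = y
        · rw [hv, hgy]; omega
        · rw [hgne v hv]; exact hle v
      · intro v hv0
        have hvy : v ≠ y := by intro h; rw [h, hgy] at hv0; omega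
        rw [hgne v hvy] at hv0
        obtain ⟨u, huv, hfu⟩ := hdom v hv0
        have hux : u = x := hux2 u hfu
        have hG : G.Adj u v := by
          rcases (hadj u v).1 huv with h | ⟨_, ⟨h1, h2⟩ | ⟨h1, h2⟩⟩
          · exact h
          · exact absurd h2 hvy
          · rw [h1, hfy] at hfu; omega
        exact ⟨u, hG, by rw [hgne u (by rw [hux]; exact hxy), hux, hfx]⟩
      · intro v hv0
        by_cases hvy : v = y
        · subst hvy
          exact ⟨w, hyw.symm, by rw [hgne w hyw.ne']; exact hfw⟩
        · rw [hgne v hvy] at hv0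
          obtain ⟨u, huv, hfu⟩ := hpos v hv0
          have huy : u ≠ y := fun h => by rw [h, hfy] at hfu; omega
          have hG : G.Adj u v := by
            rcases (hadj u v).1 huv with h | ⟨_, ⟨h1, h2⟩ | ⟨h1, h2⟩⟩
            · exact h
            · exact absurd h2 hvy
            · exact absurd h1 huy
          exact ⟨u, hG, by rw [hgne u huy]; exact hfu⟩
    have := hmin g hTR
    omega
  · push_neg at hex
    obtain ⟨w, hyw⟩ := exists_adj G hconn hxy.symm
    have hfw : f w = 0 := by have := hex w hyw; omega
    obtain ⟨u, huw, hfu⟩ := hdom w hfw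
    have hux : u = x := hux2 u hfu
    have hG : G.Adj u w := by
      rcases (hadj u w).1 huw with h | ⟨_, ⟨h1, h2⟩ | ⟨h1, h2⟩⟩
      · exact h
      · exact absurd h2 hyw.ne'
      · rw [h1, hfy] at hfu; omega
    have h1 : G.dist x w = 1 := dist_eq_one_iff_adj.2 (by rw [← hux]; exact hG)
    have h2 : G.dist w y = 1 := dist_eq_one_iff_adj.2 hyw.symm
    have h3 := hconn.dist_triangle (u := x) (v := w) (w := y)
    omega

private lemma sub_b2A (hconn : G.Connected) {t : V}
    (hadj : ∀ u v, H.Adj u v ↔ G.Adj u v ∨ (u ≠ v ∧ ((u = x ∧ v = y) ∨ (u = y ∧ v = x))))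
    (hdom : ∀ v, f v = 0 → ∃ u, H.Adj u v ∧ f u = 2)
    (hpos : ∀ v, 0 < f v → ∃ u, H.Adj u v ∧ 0 < f u)
    (hsupp : ∀ v, f v ≠ 0 → v = x ∨ v = y ∨ v = t)
    (hft : f t = 2) (hfx : f x = 1) (hfy : f y = 1)
    (htx : t ≠ x) (hty : t ≠ y)
    (hx0 : ∀ w, G.Adj x w → f w = 0) (hd : 4 ≤ G.dist x y) : False := by
  have hxy : x ≠ y := by rintro rfl; rw [SimpleGraph.dist_self] at hd; omega
  obtain ⟨u, hut, hfu⟩ := hpos t (by omega)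
  have hGut : G.Adj u t := by
    rcases (hadj u t).1 hut with h | ⟨_, ⟨h1, h2⟩ | ⟨h1, h2⟩⟩
    · exact h
    · exact absurd h2 hty
    · exact absurd h2 htx
  have hux : u ≠ x := by
    intro h
    rw [h] at hGut
    rw [hx0 t hGut] at hft
    omega
  have huy : u = y := by
    rcases hsupp u (by omega) with h | h | h
    · exact absurd h hux
    · exact h
    · exact absurd h hGut.ne
  have hdyt : G.dist y t = 1 := dist_eq_one_iff_adj.2 (by rw [← huy]; exact hGut)
  obtain ⟨w, hw⟩ := exists_adj G hconn hxy
  have hfw : f w = 0 := hx0 w hw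
  obtain ⟨u', hu'w, hfu'⟩ := hdom w hfw
  have hu't : u' = t := by
    rcases hsupp u' (by omega) with h | h | h
    · rw [h, hfx] at hfu'; omega
    · rw [h, hfy] at hfu'; omega
    · exact h
  have hGtw : G.Adj t w := by
    rcases (hadj u' w).1 hu'w with h | ⟨_, ⟨h1, h2⟩ | ⟨h1, h2⟩⟩
    · rw [← hu't]; exact h
    · exact absurd (hu't ▸ h1 : t = x) htx
    · exact absurd h2 hw.ne'
  have d1 : G.dist x w = 1 := dist_eq_one_iff_adj.2 hw
  have d2 : G.dist w t = 1 := dist_eq_one_iff_adj.2 hGtw.symm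
  have hc : G.dist t y = G.dist y t := SimpleGraph.dist_comm
  have tri1 := hconn.dist_triangle (u := x) (v := w) (w := y)
  have tri2 := hconn.dist_triangle (u := w) (v := t) (w := y)
  omega

private lemma sub_b2B (hconn : G.Connected) {t : V}
    (hadj : ∀ u v, H.Adj u v ↔ G.Adj u v ∨ (u ≠ v ∧ ((u = x ∧ v = y) ∨ (u = y ∧ v = x))))
    (hdom : ∀ v, f v = 0 → ∃ u, H.Adj u v ∧ f u = 2)
    (hpos : ∀ v, 0 < f v → ∃ u, H.Adj u v ∧ 0 < f u)
    (hsupp : ∀ v, f v ≠ 0 → v = x ∨ v = y ∨ v = t)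
    (hft : f t = 1) (hfx : f x = 2) (hfy : f y = 1)
    (htx : t ≠ x) (hty : t ≠ y)
    (hx0 : ∀ w, G.Adj x w → f w = 0) (hd : 4 ≤ G.dist x y) : False := by
  have hxy : x ≠ y := by rintro rfl; rw [SimpleGraph.dist_self] at hd; omega
  obtain ⟨u, hut, hfu⟩ := hpos t (by omega)
  have hGut : G.Adj u t := by
    rcases (hadj u t).1 hut with h | ⟨_, ⟨h1, h2⟩ | ⟨h1, h2⟩⟩
    · exact h
    · exact absurd h2 hty
    · exact absurd h2 htx
  have hux : u ≠ x := by
    intro h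
    rw [h] at hGut
    rw [hx0 t hGut] at hft
    omega
  have huy : u = y := by
    rcases hsupp u (by omega) with h | h | h
    · exact absurd h hux
    · exact h
    · exact absurd h hGut.ne
  have hdyt : G.dist y t = 1 := dist_eq_one_iff_adj.2 (by rw [← huy]; exact hGut)
  have hcxy : G.dist y x = G.dist x y := SimpleGraph.dist_comm
  obtain ⟨z, hz⟩ := exists_dist_eq' G hconn y x 2 (by omega)
  have hzy : z ≠ y := by rintro rfl; rw [SimpleGraph.dist_self] at hz; omega
  have hzx : z ≠ x := by rintro rfl; omega
  have hzt : z ≠ t := by rintro rfl; omega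
  have hfz : f z = 0 := by
    by_contra h
    rcases hsupp z h with h' | h' | h' <;> [exact hzx h'; exact hzy h'; exact hzt h']
  obtain ⟨u', hu'z, hfu'⟩ := hdom z hfz
  have hu'x : u' = x := by
    rcases hsupp u' (by omega) with h | h | h
    · exact h
    · rw [h, hfy] at hfu'; omega
    · rw [h, hft] at hfu'; omega
  have hGxz : G.Adj x z := by
    rcases (hadj u' z).1 hu'z with h | ⟨_, ⟨h1, h2⟩ | ⟨h1, h2⟩⟩
    · rw [← hu'x]; exact h
    · exact absurd h2 hzy
    · exact absurd h2 hzx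
  have d1 : G.dist z x = 1 := dist_eq_one_iff_adj.2 hGxz.symm
  have tri := hconn.dist_triangle (u := y) (v := z) (w := x)
  omega

private lemma sub_b2C (hconn : G.Connected) {t : V}
    (hadj : ∀ u v, H.Adj u v ↔ G.Adj u v ∨ (u ≠ v ∧ ((u = x ∧ v = y) ∨ (u = y ∧ v = x))))
    (hdom : ∀ v, f v = 0 → ∃ u, H.Adj u v ∧ f u = 2)
    (hpos : ∀ v, 0 < f v → ∃ u, H.Adj u v ∧ 0 < f u)
    (hsupp : ∀ v, f v ≠ 0 → v = x ∨ v = y ∨ v = t)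
    (hft : f t = 1) (hfx : f x = 1) (hfy : f y = 2)
    (htx : t ≠ x) (hty : t ≠ y)
    (hx0 : ∀ w, G.Adj x w → f w = 0) (hd : 4 ≤ G.dist x y) : False := by
  have hxy : x ≠ y := by rintro rfl; rw [SimpleGraph.dist_self] at hd; omega
  obtain ⟨u, hut, hfu⟩ := hpos t (by omega)
  have hGut : G.Adj u t := by
    rcases (hadj u t).1 hut with h | ⟨_, ⟨h1, h2⟩ | ⟨h1, h2⟩⟩
    · exact h
    · exact absurd h2 hty
    · exact absurd h2 htx
  have hux : u ≠ x := by
    intro h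
    rw [h] at hGut
    rw [hx0 t hGut] at hft
    omega
  have huy : u = y := by
    rcases hsupp u (by omega) with h | h | h
    · exact absurd h hux
    · exact h
    · exact absurd h hGut.ne
  have hdyt : G.dist y t = 1 := dist_eq_one_iff_adj.2 (by rw [← huy]; exact hGut)
  have hcty : G.dist t y = G.dist y t := SimpleGraph.dist_comm
  obtain ⟨z, hz⟩ := exists_dist_eq' G hconn x y 2 (by omega)
  have hzx : z ≠ x := by rintro rfl; rw [SimpleGraph.dist_self] at hz; omega
  have hzy : z ≠ y := by rintro rfl; omega
  have hzt : z ≠ t := by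
    rintro rfl
    have tri := hconn.dist_triangle (u := x) (v := z) (w := y)
    omega
  have hfz : f z = 0 := by
    by_contra h
    rcases hsupp z h with h' | h' | h' <;> [exact hzx h'; exact hzy h'; exact hzt h']
  obtain ⟨u', hu'z, hfu'⟩ := hdom z hfz
  have hu'y : u' = y := by
    rcases hsupp u' (by omega) with h | h | h
    · rw [h, hfx] at hfu'; omega
    · exact h
    · rw [h, hft] at hfu'; omega
  have hGyz : G.Adj y z := by
    rcases (hadj u' z).1 hu'z with h | ⟨_, ⟨h1, h2⟩ | ⟨h1, h2⟩⟩
    · rw [← hu'y]; exact h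
    · exact absurd h2 hzy
    · exact absurd h2 hzx
  have d1 : G.dist z y = 1 := dist_eq_one_iff_adj.2 hGyz.symm
  have tri := hconn.dist_triangle (u := x) (v := z) (w := y)
  omega

private lemma sub_b2 (hconn : G.Connected) {a b c : V}
    (hadj : ∀ u v, H.Adj u v ↔ G.Adj u v ∨ (u ≠ v ∧ ((u = x ∧ v = y) ∨ (u = y ∧ v = x))))
    (hdom : ∀ v, f v = 0 → ∃ u, H.Adj u v ∧ f u = 2)
    (hpos : ∀ v, 0 < f v → ∃ u, H.Adj u v ∧ 0 < f u)
    (hsupp : ∀ v, f v ≠ 0 → v = a ∨ v = b ∨ v = c)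
    (hbc : b ≠ c) (hfa : f a = 2) (hfb : f b = 1) (hfc : f c = 1)
    (hfx : 0 < f x) (hfy : 0 < f y)
    (hx0 : ∀ w, G.Adj x w → f w = 0) (hd : 4 ≤ G.dist x y) : False := by
  have hxy : x ≠ y := by rintro rfl; rw [SimpleGraph.dist_self] at hd; omega
  rcases hsupp x (by omega) with hx | hx | hx <;> rcases hsupp y (by omega) with hy | hy | hy
  · exact hxy (hx.trans hy.symm)
  · subst hx; subst hy
    exact sub_b2B hconn hadj hdom hpos
      (fun v hv => by rcases hsupp v hv with h | h | h <;> tauto)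
      hfc hfa hfb (fun h => by rw [h, hfa] at hfc; omega) hbc.symm hx0 hd
  · subst hx; subst hy
    exact sub_b2B hconn hadj hdom hpos
      (fun v hv => by rcases hsupp v hv with h | h | h <;> tauto)
      hfb hfa hfc (fun h => by rw [h, hfa] at hfb; omega) hbc hx0 hd
  · subst hx; subst hy
    exact sub_b2C hconn hadj hdom hpos
      (fun v hv => by rcases hsupp v hv with h | h | h <;> tauto)
      hfc hfb hfa hbc.symm (fun h => by rw [h, hfa] at hfc; omega) hx0 hd
  · exact hxy (hx.trans hy.symm)
  · subst hx; subst hy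
    exact sub_b2A hconn hadj hdom hpos
      (fun v hv => by rcases hsupp v hv with h | h | h <;> tauto)
      hfa hfb hfc (fun h => by rw [h, hfb] at hfa; omega)
      (fun h => by rw [h, hfc] at hfa; omega) hx0 hd
  · subst hx; subst hy
    exact sub_b2C hconn hadj hdom hpos
      (fun v hv => by rcases hsupp v hv with h | h | h <;> tauto)
      hfb hfc hfa hbc (fun h => by rw [h, hfa] at hfb; omega) hx0 hd
  · subst hx; subst hy
    exact sub_b2A hconn hadj hdom hpos
      (fun v hv => by rcases hsupp v hv with h | h | h <;> tauto)
      hfa hfc hfb (fun h => by rw [h, hfc] at hfa; omega)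
      (fun h => by rw [h, hfb] at hfa; omega) hx0 hd
  · exact hxy (hx.trans hy.symm)

private lemma main_contra (hconn : G.Connected)
    (hmin : ∀ g : V → ℕ, IsTRDF G g → 6 ≤ ∑ v, g v)
    (hH : ∀ u v, H.Adj u v ↔ G.Adj u v ∨ (u ≠ v ∧ ((u = x ∧ v = y) ∨ (u = y ∧ v = x))))
    (hf : IsTRDF H f) (hsum : ∑ v, f v = 4)
    (hd : 4 ≤ G.dist x y) : False := by
  classical
  obtain ⟨hle, hdom, hpos⟩ := hf
  have hxy : x ≠ y := by rintro rfl; rw [SimpleGraph.dist_self] at hd; omega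
  have hadj' : ∀ u v, H.Adj u v ↔
      G.Adj u v ∨ (u ≠ v ∧ ((u = y ∧ v = x) ∨ (u = x ∧ v = y))) := by
    intro u v; rw [hH]; tauto
  have hd' : 4 ≤ G.dist y x := by
    have : G.dist y x = G.dist x y := SimpleGraph.dist_comm
    omega
  rcases weight4_cases f hle hsum with ⟨a, b, hab, hfa, hfb, hsupp⟩ |
    ⟨a, b, c, hab, hac, hbc, hfa, hfb, hfc, hsupp⟩ | hno2
  · -- two 2's
    obtain ⟨u, hua, hfu⟩ := hpos a (by omega)
    have hub : u = b := by
      rcases hsupp u (by omega) with h | h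
      · exact absurd h hua.ne
      · exact h
    have hHab : H.Adj a b := (hub ▸ hua).symm
    by_cases hcase : (a = x ∧ b = y) ∨ (a = y ∧ b = x)
    · obtain ⟨z, hz⟩ := exists_dist_eq' G hconn x y 2 (by omega)
      have hzx : z ≠ x := by rintro rfl; rw [SimpleGraph.dist_self] at hz; omega
      have hzy : z ≠ y := by rintro rfl; omega
      have hza : z ≠ a ∧ z ≠ b := by
        rcases hcase with ⟨h1, h2⟩ | ⟨h1, h2⟩ <;> subst h1 <;> subst h2 <;>
          exact ⟨by assumption, by assumption⟩
      have hfz : f z = 0 := by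
        by_contra h
        rcases hsupp z h with h' | h' <;> [exact hza.1 h'; exact hza.2 h']
      obtain ⟨u', hu'z, hfu'⟩ := hdom z hfz
      have hG : G.Adj u' z := by
        rcases (hH u' z).1 hu'z with h | ⟨_, ⟨h1, h2⟩ | ⟨h1, h2⟩⟩
        · exact h
        · exact absurd h2 hzy
        · exact absurd h2 hzx
      have hu'xy : u' = x ∨ u' = y := by
        rcases hsupp u' (by omega) with h | h <;>
          rcases hcase with ⟨h1, h2⟩ | ⟨h1, h2⟩ <;> subst h <;> tauto
      rcases hu'xy with h | h
      · have : G.dist x z = 1 := dist_eq_one_iff_adj.2 (by rw [← h]; exact hG)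
        omega
      · have hyz : G.Adj y z := by rw [← h]; exact hG
        have h1 : G.dist z y = 1 := dist_eq_one_iff_adj.2 hyz.symm
        have tri := hconn.dist_triangle (u := x) (v := z) (w := y)
        omega
    · have hGab : G.Adj a b := by
        rcases (hH a b).1 hHab with h | ⟨_, h⟩
        · exact h
        · exact absurd h hcase
      by_cases htr : ∀ v, f v = 0 → ∃ u, G.Adj u v ∧ f u = 2
      · have hTR : IsTRDF G f := by
          refine ⟨hle, htr, fun v hv => ?_⟩
          rcases hsupp v (by omega) with h | h
          · exact ⟨b, by rw [h]; exact hGab.symm, by omega⟩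
          · exact ⟨a, by rw [h]; exact hGab, by omega⟩
        have := hmin f hTR
        omega
      · push_neg at htr
        obtain ⟨v, hv0, hnd⟩ := htr
        obtain ⟨u, huv, hfu⟩ := hdom v hv0
        have hnG : ¬G.Adj u v := fun h => hnd u h hfu
        rcases (hH u v).1 huv with h | ⟨_, ⟨h1, h2⟩ | ⟨h1, h2⟩⟩
        · exact hnG h
        · subst h1; subst h2
          exact sub_a hconn hH hdom hsupp hfa hfb hGab hfu hv0 hd
        · subst h1; subst h2
          exact sub_a hconn hadj' hdom hsupp hfa hfb hGab hfu hv0 hd'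
  · -- one 2 and two 1's
    by_cases h1 : ∀ v, f v = 0 → ∃ u, G.Adj u v ∧ f u = 2
    · by_cases h2 : ∀ v, 0 < f v → ∃ u, G.Adj u v ∧ 0 < f u
      · have := hmin f ⟨hle, h1, h2⟩
        omega
      · push_neg at h2
        obtain ⟨v, hv0, hall⟩ := h2
        obtain ⟨u, huv, hfu⟩ := hpos v hv0
        have hnG : ¬G.Adj u v := fun h => by have := hall u h; omega
        rcases (hH u v).1 huv with h | ⟨_, ⟨hu1, hv1⟩ | ⟨hu1, hv1⟩⟩
        · exact hnG h
        · -- u = x, v = y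
          rw [hu1] at hfu
          rw [hv1] at hv0 hall
          exact sub_b2 (x := y) (y := x) hconn hadj' hdom hpos hsupp hbc hfa hfb hfc
            hv0 hfu (fun w hw => by have := hall w hw.symm; omega) hd'
        · -- u = y, v = x
          rw [hu1] at hfu
          rw [hv1] at hv0 hall
          exact sub_b2 hconn hH hdom hpos hsupp hbc hfa hfb hfc
            hv0 hfu (fun w hw => by have := hall w hw.symm; omega) hd
    · push_neg at h1
      obtain ⟨v, hv0, hnd⟩ := h1
      obtain ⟨u, huv, hfu⟩ := hdom v hv0
      have hnG : ¬G.Adj u v := fun h => hnd u h hfu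
      have huxa : ∀ w, f w = 2 → w = a := by
        intro w hw
        rcases hsupp w (by omega) with h | h | h
        · exact h
        · rw [h, hfb] at hw; omega
        · rw [h, hfc] at hw; omega
      rcases (hH u v).1 huv with h | ⟨_, ⟨hu1, hv1⟩ | ⟨hu1, hv1⟩⟩
      · exact hnG h
      · -- u = x, v = y : f x = 2, f y = 0
        rw [hu1] at hfu
        rw [hv1] at hv0
        have hax : a = x := (huxa x hfu).symm
        have hsupp' : ∀ w, f w ≠ 0 → w = x ∨ w = b ∨ w = c := by
          intro w hw
          rcases hsupp w hw with h | h | h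
          · exact Or.inl (h.trans hax)
          · exact Or.inr (Or.inl h)
          · exact Or.inr (Or.inr h)
        exact sub_b1 hconn hmin hH hle hdom hpos hsum hsupp' hfu hfb hfc hv0 hd
      · -- u = y, v = x : f y = 2, f x = 0
        rw [hu1] at hfu
        rw [hv1] at hv0
        have hax : a = y := (huxa y hfu).symm
        have hsupp' : ∀ w, f w ≠ 0 → w = y ∨ w = b ∨ w = c := by
          intro w hw
          rcases hsupp w hw with h | h | h
          · exact Or.inl (h.trans hax)
          · exact Or.inr (Or.inl h)
          · exact Or.inr (Or.inr h)
        exact sub_b1 (x := y) (y := x) hconn hmin hadj' hle hdom hpos hsum hsupp'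
          hfu hfb hfc hv0 hd'
  · -- no 2's
    have hallpos : ∀ v, 0 < f v := by
      intro v
      by_contra h
      obtain ⟨u, _, hfu⟩ := hdom v (by omega)
      exact hno2 u hfu
    have hvne : ∀ v : V, ∃ w, G.Adj v w := by
      intro v
      by_cases h : v = x
      · subst h; exact exists_adj G hconn hxy
      · exact exists_adj G hconn h
    have hTR : IsTRDF G f := by
      refine ⟨hle, fun v hv => absurd hv (by have := hallpos v; omega), fun v _ => ?_⟩
      obtain ⟨w, hw⟩ := hvne v
      exact ⟨w, hw.symm, hallpos w⟩
    have := hmin f hTR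
    omega

end subs
end helpers

theorem stmt14 (G : SimpleGraph V) [Fintype V] (hconn : G.Connected)
    (h6 : gammaTR G = 6) (hne : ∃ u v : V, u ≠ v ∧ ¬G.Adj u v)
    (hsuper : ∀ u v : V, u ≠ v → ¬G.Adj u v → gammaTR (addEdge G u v) = 4) :
    2 ≤ G.diam ∧ G.diam ≤ 3 := by
  classical
  obtain ⟨u0, v0, huv0, hnadj0⟩ := hne
  have hmin : ∀ g : V → ℕ, IsTRDF G g → 6 ≤ ∑ v, g v := by
    intro g hg
    have : gammaTR G ≤ ∑ v, g v := Nat.sInf_le ⟨g, hg, rfl⟩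
    omega
  have hdist3 : ∀ x y : V, G.dist x y ≤ 3 := by
    intro x y
    by_contra hgt
    have hd : 4 ≤ G.dist x y := by omega
    have hxy : x ≠ y := by rintro rfl; rw [SimpleGraph.dist_self] at hd; omega
    have hnadj : ¬G.Adj x y := fun h => by
      have := SimpleGraph.dist_eq_one_iff_adj.2 h; omega
    have h4 := hsuper x y hxy hnadj
    have hone : IsTRDF (addEdge G x y) (fun _ => 1) := by
      refine ⟨fun _ => by simp, fun v hv => by simp at hv, fun v _ => ?_⟩
      have hex : ∃ w, G.Adj v w := by
        by_cases h : v = x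
        · subst h; exact exists_adj G hconn hxy
        · exact exists_adj G hconn h
      obtain ⟨w, hw⟩ := hex
      exact ⟨w, ((addEdge_adj' G x y w v).2 (Or.inl hw.symm)), by simp⟩
    have hmem : (4 : ℕ) ∈ {n | ∃ f : V → ℕ, IsTRDF (addEdge G x y) f ∧ ∑ v, f v = n} := by
      rw [← h4]
      exact Nat.sInf_mem ⟨_, _, hone, rfl⟩
    obtain ⟨f, hf, hsum⟩ := hmem
    exact main_contra hconn hmin (addEdge_adj' G x y) hf hsum hd
  have hnev : Nonempty V := ⟨u0⟩
  have hfin : G.ediam ≠ ⊤ := by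
    obtain ⟨u, v, huv⟩ := SimpleGraph.exists_edist_eq_ediam_of_finite (G := G)
    rw [← huv]
    exact (SimpleGraph.edist_ne_top_iff_reachable).2 (hconn.preconnected u v)
  constructor
  · have h2 : 2 ≤ G.dist u0 v0 := by
      have h0 := hconn.pos_dist_of_ne huv0
      have h1 : G.dist u0 v0 ≠ 1 := fun h => hnadj0 (SimpleGraph.dist_eq_one_iff_adj.1 h)
      omega
    exact le_trans h2 (SimpleGraph.dist_le_diam hfin)
  · have hle3 : G.ediam ≤ ((3 : ℕ) : ℕ∞) := by
      apply SimpleGraph.ediam_le_of_edist_le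
      intro u v
      obtain ⟨p, hp⟩ := hconn.exists_walk_length_eq_dist u v
      have h1 : G.edist u v ≤ p.length := SimpleGraph.edist_le p
      have h2 : (p.length : ℕ∞) ≤ ((3 : ℕ) : ℕ∞) := by
        have := hdist3 u v
        exact Nat.cast_le.2 (by omega)
      exact le_trans h1 h2
    exact ENat.toNat_le_of_le_coe hle3
end

section
/- A connected graph G with no isolated vertices is γ_tR-edge-removal-supercritical if and only if G is either a nontrivial star K_{1,n} (n ≥ 1), or a double star in which each of the two non-pendant vertices has degree at least 3. -/
open SimpleGraph Finset

variable {V : Type*}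

lemma adj_del {G : SimpleGraph V} {u v a b : V} :
    (deleteEdge G u v).Adj a b ↔ G.Adj a b ∧ ¬(a = u ∧ b = v) ∧ ¬(a = v ∧ b = u) := by
  simp only [deleteEdge, SimpleGraph.deleteEdges_adj, Set.mem_singleton_iff, Sym2.eq_iff]
  tauto

lemma deleteEdge_comm {G : SimpleGraph V} {u v : V} :
    deleteEdge G u v = deleteEdge G v u := by
  ext a b; rw [adj_del, adj_del]; tauto

lemma one_le_degree [Fintype V] {G : SimpleGraph V} {v u : V} (h : G.Adj v u) : 1 ≤ degreeN G v := by
  have : 0 < degreeN G v := (Set.ncard_pos (Set.toFinite _)).mpr ⟨u, h⟩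
  omega

lemma two_le_degree_of_ne [Fintype V] {G : SimpleGraph V} {v u w : V} (h1 : G.Adj v u) (h2 : G.Adj v w)
    (hne : u ≠ w) : 2 ≤ degreeN G v :=
  (Set.one_lt_ncard (Set.toFinite _)).mpr ⟨u, h1, w, h2, hne⟩

lemma degree_one_unique [Fintype V] {G : SimpleGraph V} {v u w : V} (hd : degreeN G v = 1)
    (h1 : G.Adj v u) (h2 : G.Adj v w) : w = u := by
  by_contra hne
  have := two_le_degree_of_ne h1 h2 (fun h => hne h.symm)
  omega

lemma two_le_degree_of_not_one [Fintype V] {G : SimpleGraph V} (hiso : NoIsolated G) {v : V}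
    (h : degreeN G v ≠ 1) : 2 ≤ degreeN G v := by
  obtain ⟨u, hu⟩ := hiso v
  have := one_le_degree hu.symm
  omega

lemma exists_other_nbr [Fintype V] {G : SimpleGraph V} {v u : V} (h2 : 2 ≤ degreeN G v)
    (hu : G.Adj v u) : ∃ w, G.Adj v w ∧ w ≠ u := by
  by_contra h
  push_neg at h
  have hsub : {w | G.Adj v w} ⊆ {u} := fun w hw => h w hw
  have := Set.ncard_le_ncard hsub (Set.finite_singleton u)
  rw [Set.ncard_singleton] at this
  unfold degreeN at h2; omega

lemma nbr_cases_of_degree_two [Fintype V] {G : SimpleGraph V} {v a b w : V} (hd : degreeN G v = 2)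
    (ha : G.Adj v a) (hb : G.Adj v b) (hab : a ≠ b) (hw : G.Adj v w) : w = a ∨ w = b := by
  obtain ⟨x, y, hxy, hset⟩ := Set.ncard_eq_two.mp hd
  have ha' : a ∈ ({x, y} : Set V) := hset ▸ ha
  have hb' : b ∈ ({x, y} : Set V) := hset ▸ hb
  have hw' : w ∈ ({x, y} : Set V) := hset ▸ hw
  simp at ha' hb' hw'
  rcases ha' with rfl | rfl <;> rcases hb' with rfl | rfl <;> tauto

lemma exists_two_other [Fintype V] {G : SimpleGraph V} {v d : V} (h3 : 3 ≤ degreeN G v)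
    (hd : G.Adj v d) : ∃ a b, G.Adj v a ∧ G.Adj v b ∧ a ≠ b ∧ a ≠ d ∧ b ≠ d := by
  have hmem : d ∈ {u | G.Adj v u} := hd
  have hcard := Set.ncard_diff_singleton_add_one hmem (Set.toFinite _)
  have h2 : 1 < ({u | G.Adj v u} \ {d}).ncard := by unfold degreeN at h3; omega
  obtain ⟨a, ha, b, hb, hab⟩ := (Set.one_lt_ncard (Set.toFinite _)).mp h2
  simp only [Set.mem_diff, Set.mem_singleton_iff, Set.mem_setOf_eq] at ha hb
  exact ⟨a, b, ha.1, hb.1, hab, ha.2, hb.2⟩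

lemma eq_univ_of_closed {G : SimpleGraph V} (hconn : G.Connected) (S : Set V) {c : V}
    (hc : c ∈ S) (hcl : ∀ a ∈ S, ∀ b, G.Adj a b → b ∈ S) : ∀ v, v ∈ S := by
  intro v
  have key : ∀ {a b : V}, G.Walk a b → a ∈ S → b ∈ S := by
    intro a b p
    induction p with
    | nil => exact id
    | cons h _ ih => exact fun ha => ih (hcl _ ha _ h)
  obtain ⟨p⟩ := hconn.preconnected c v
  exact key p hc

lemma isTRDF_const2 {G : SimpleGraph V} (h : NoIsolated G) : IsTRDF G (fun _ => 2) :=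
  ⟨fun _ => le_refl 2, fun v hv => by simp at hv,
   fun v _ => (h v).imp fun u hu => ⟨hu, by norm_num⟩⟩

lemma gammaTR_le {G : SimpleGraph V} [Fintype V] {f : V → ℕ} (hf : IsTRDF G f) :
    gammaTR G ≤ ∑ v, f v := Nat.sInf_le ⟨f, hf, rfl⟩

lemma exists_gammaTR {G : SimpleGraph V} [Fintype V] (h : NoIsolated G) :
    ∃ f, IsTRDF G f ∧ ∑ v, f v = gammaTR G :=
  Nat.sInf_mem (s := {n | ∃ f : V → ℕ, IsTRDF G f ∧ ∑ v, f v = n})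
    ⟨_, ⟨fun _ => 2, isTRDF_const2 h, rfl⟩⟩

lemma le_gammaTR {G : SimpleGraph V} [Fintype V] {k : ℕ} (hne : NoIsolated G)
    (h : ∀ f, IsTRDF G f → k ≤ ∑ v, f v) : k ≤ gammaTR G := by
  obtain ⟨f, hf, hw⟩ := exists_gammaTR hne
  exact hw ▸ h f hf

lemma sum_pair_le [Fintype V] {g : V → ℕ} {S : Finset V} {a b : V} (hab : a ≠ b)
    (ha : a ∈ S) (hb : b ∈ S) : g a + g b ≤ ∑ v ∈ S, g v := by
  classical
  have hsub : ({a, b} : Finset V) ⊆ S := by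
    intro x hx; simp at hx; rcases hx with rfl | rfl <;> assumption
  calc g a + g b = ∑ v ∈ {a, b}, g v := (Finset.sum_pair hab).symm
    _ ≤ _ := Finset.sum_le_sum_of_subset hsub

lemma sum_triple_le [Fintype V] {g : V → ℕ} {S : Finset V} {a b c : V} (hab : a ≠ b)
    (hac : a ≠ c) (hbc : b ≠ c) (ha : a ∈ S) (hb : b ∈ S) (hc : c ∈ S) :
    g a + g b + g c ≤ ∑ v ∈ S, g v := by
  classical
  have hsub : ({a, b, c} : Finset V) ⊆ S := by
    intro x hx; simp at hx; rcases hx with rfl | rfl | rfl <;> assumption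
  have h1 : ∑ v ∈ ({a, b, c} : Finset V), g v = g a + (g b + g c) := by
    rw [Finset.sum_insert (by simp [hab, hac]), Finset.sum_pair hbc]
  calc g a + g b + g c = ∑ v ∈ ({a, b, c} : Finset V), g v := by rw [h1]; ring
    _ ≤ _ := Finset.sum_le_sum_of_subset hsub

lemma sum_eq_pair [Fintype V] {f : V → ℕ} {c d : V} (hcd : c ≠ d)
    (h0 : ∀ v, v ≠ c → v ≠ d → f v = 0) : ∑ v, f v = f c + f d := by
  classical
  rw [← Finset.sum_pair hcd]
  exact (Finset.sum_subset (Finset.subset_univ _) (by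
    intro x _ hx; simp at hx; exact h0 x hx.1 hx.2)).symm

lemma sum_eq_four [Fintype V] {f : V → ℕ} {a b c d : V}
    (hab : a ≠ b) (hac : a ≠ c) (had : a ≠ d) (hbc : b ≠ c) (hbd : b ≠ d) (hcd : c ≠ d)
    (h0 : ∀ v, v ≠ a → v ≠ b → v ≠ c → v ≠ d → f v = 0) :
    ∑ v, f v = f a + f b + f c + f d := by
  classical
  have : ∑ v ∈ ({a, b, c, d} : Finset V), f v = f a + f b + f c + f d := by
    rw [Finset.sum_insert (by simp [hab, hac, had]),
        Finset.sum_insert (by simp [hbc, hbd]), Finset.sum_pair hcd]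
    ring
  rw [← this]
  exact (Finset.sum_subset (Finset.subset_univ _) (by
    intro x _ hx; simp at hx; exact h0 x hx.1 hx.2.1 hx.2.2.1 hx.2.2.2)).symm

lemma sum_update [Fintype V] [DecidableEq V] {f : V → ℕ} {x : V} (hx : f x = 0) :
    ∑ v, Function.update f x 1 v = ∑ v, f v + 1 := by
  rw [Finset.sum_update_of_mem (Finset.mem_univ x)]
  have h2 : f x + ∑ v ∈ Finset.univ.erase x, f v = ∑ v, f v :=
    Finset.add_sum_erase _ f (Finset.mem_univ x)
  rw [Finset.sdiff_singleton_eq_erase]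
  omega

/-- If the witnesses of `u` and `v` can avoid each other, `f` remains a TRDF of `G - uv`. -/
lemma isTRDF_deleteEdge {G : SimpleGraph V} {u v : V} {f : V → ℕ} (hf : IsTRDF G f)
    (hu : f u = 0 → ∃ w, w ≠ v ∧ G.Adj w u ∧ f w = 2)
    (hv : f v = 0 → ∃ w, w ≠ u ∧ G.Adj w v ∧ f w = 2)
    (hu' : 0 < f u → ∃ w, w ≠ v ∧ G.Adj w u ∧ 0 < f w)
    (hv' : 0 < f v → ∃ w, w ≠ u ∧ G.Adj w v ∧ 0 < f w) :
    IsTRDF (deleteEdge G u v) f := by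
  obtain ⟨hb, h0, h1⟩ := hf
  refine ⟨hb, ?_, ?_⟩
  · intro z hz
    by_cases hzu : z = u
    · obtain ⟨w, hwv, hwa, hw2⟩ := hu (hzu ▸ hz)
      exact ⟨w, adj_del.mpr ⟨by rw [hzu]; exact hwa,
        fun h => hwa.ne h.1, fun h => hwv h.1⟩, hw2⟩
    by_cases hzv : z = v
    · obtain ⟨w, hwu, hwa, hw2⟩ := hv (hzv ▸ hz)
      exact ⟨w, adj_del.mpr ⟨by rw [hzv]; exact hwa, fun h => hwu h.1,
        fun h => hwa.ne h.1⟩, hw2⟩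
    obtain ⟨w, hwa, hw2⟩ := h0 z hz
    exact ⟨w, adj_del.mpr ⟨hwa, fun h => hzv h.2, fun h => hzu h.2⟩, hw2⟩
  · intro z hz
    by_cases hzu : z = u
    · obtain ⟨w, hwv, hwa, hw2⟩ := hu' (hzu ▸ hz)
      exact ⟨w, adj_del.mpr ⟨by rw [hzu]; exact hwa,
        fun h => hwa.ne h.1, fun h => hwv h.1⟩, hw2⟩
    by_cases hzv : z = v
    · obtain ⟨w, hwu, hwa, hw2⟩ := hv' (hzv ▸ hz)
      exact ⟨w, adj_del.mpr ⟨by rw [hzv]; exact hwa, fun h => hwu h.1,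
        fun h => hwa.ne h.1⟩, hw2⟩
    obtain ⟨w, hwa, hw2⟩ := h1 z hz
    exact ⟨w, adj_del.mpr ⟨hwa, fun h => hzv h.2, fun h => hzu h.2⟩, hw2⟩

/-- Bumping a zero vertex `x` to 1. -/
lemma isTRDF_update [DecidableEq V] {H : SimpleGraph V} {f : V → ℕ} {x : V}
    (hb : ∀ z, f z ≤ 2) (hx : f x = 0)
    (h0 : ∀ z, z ≠ x → f z = 0 → ∃ w, H.Adj w z ∧ f w = 2)
    (h1 : ∀ z, 0 < f z → (H.Adj x z ∨ ∃ w, H.Adj w z ∧ 0 < f w))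
    (hxw : ∃ w, H.Adj w x ∧ 0 < f w) :
    IsTRDF H (Function.update f x 1) := by
  refine ⟨?_, ?_, ?_⟩
  · intro z
    rw [Function.update_apply]
    by_cases h : z = x
    · rw [if_pos h]; omega
    · rw [if_neg h]; exact hb z
  · intro z hz
    rw [Function.update_apply] at hz
    have hzx : z ≠ x := by intro h; rw [if_pos h] at hz; omega
    rw [if_neg hzx] at hz
    obtain ⟨w, hwa, hw2⟩ := h0 z hzx hz
    have hwx : w ≠ x := fun h => by rw [h, hx] at hw2; omega
    exact ⟨w, hwa, by rw [Function.update_apply, if_neg hwx]; exact hw2⟩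
  · intro z hzp
    by_cases hzx : z = x
    · obtain ⟨w, hwa, hwp⟩ := hxw
      have hwx : w ≠ x := fun h => by rw [h, hx] at hwp; omega
      exact ⟨w, by rw [hzx]; exact hwa,
        by rw [Function.update_apply, if_neg hwx]; exact hwp⟩
    · have hzp' : 0 < f z := by rwa [Function.update_apply, if_neg hzx] at hzp
      rcases h1 z hzp' with hadj | ⟨w, hwa, hwp⟩
      · exact ⟨x, hadj, by rw [Function.update_apply, if_pos rfl]; omega⟩
      · have hwx : w ≠ x := fun h => by rw [h, hx] at hwp; omega
        exact ⟨w, hwa, by rw [Function.update_apply, if_neg hwx]; exact hwp⟩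


lemma crit_bound {G : SimpleGraph V} [Fintype V] {u v : V} {g : V → ℕ}
    (hcrit : gammaTR G + 2 ≤ gammaTR (deleteEdge G u v))
    (hg : IsTRDF (deleteEdge G u v) g) : gammaTR G + 2 ≤ ∑ w, g w :=
  le_trans hcrit (gammaTR_le hg)

lemma zero_zero {G : SimpleGraph V} [Fintype V] {f : V → ℕ} {u v : V}
    (hf : IsTRDF G f) (hfw : ∑ w, f w = gammaTR G) (huv : G.Adj u v)
    (hcrit : gammaTR G + 2 ≤ gammaTR (deleteEdge G u v))
    (hu0 : f u = 0) (hv0 : f v = 0) : False := by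
  obtain ⟨hb, h0, h1⟩ := hf
  have : IsTRDF (deleteEdge G u v) f := by
    refine isTRDF_deleteEdge ⟨hb, h0, h1⟩ ?_ ?_
      (fun h => absurd h (by omega)) (fun h => absurd h (by omega))
    · intro _
      obtain ⟨w, hwa, hw2⟩ := h0 u hu0
      exact ⟨w, fun h => by rw [h, hv0] at hw2; omega, hwa, hw2⟩
    · intro _
      obtain ⟨w, hwa, hw2⟩ := h0 v hv0
      exact ⟨w, fun h => by rw [h, hu0] at hw2; omega, hwa, hw2⟩
  have := crit_bound hcrit this
  omega

lemma dichot_aux {G : SimpleGraph V} [Fintype V] {f : V → ℕ} {u v : V}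
    (hf : IsTRDF G f) (hfw : ∑ w, f w = gammaTR G) (huv : G.Adj u v)
    (hcrit : gammaTR G + 2 ≤ gammaTR (deleteEdge G u v))
    (hu0 : f u = 0) (hv0 : 0 < f v) :
    f v = 2 ∧ ∀ w, G.Adj w u → w ≠ v → f w = 0 := by
  classical
  obtain ⟨hb, h0, h1⟩ := hf
  by_cases hex : ∃ w, G.Adj w u ∧ f w = 2 ∧ w ≠ v
  · exfalso
    obtain ⟨w, hwa, hw2, hwv⟩ := hex
    have hun : IsTRDF (deleteEdge G u v) f := by
      refine isTRDF_deleteEdge ⟨hb, h0, h1⟩ (fun _ => ⟨w, hwv, hwa, hw2⟩)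
        (fun h => absurd h (by omega)) (fun h => absurd h (by omega)) ?_
      intro hvp
      obtain ⟨t, hta, htp⟩ := h1 v hvp
      exact ⟨t, fun h => by rw [h, hu0] at htp; omega, hta, htp⟩
    have := crit_bound hcrit hun
    omega
  constructor
  · obtain ⟨w, hwa, hw2⟩ := h0 u hu0
    by_cases hwv : w = v
    · rw [← hwv]; exact hw2
    · exact absurd ⟨w, hwa, hw2, hwv⟩ hex
  · intro x hxa hxv
    by_contra hxp
    have hfp : 0 < f x := Nat.pos_of_ne_zero hxp
    have hupd : IsTRDF (deleteEdge G u v) (Function.update f u 1) := by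
      apply isTRDF_update hb hu0
      · intro z hzu hz
        obtain ⟨w, hwa, hw2⟩ := h0 z hz
        have hwu : w ≠ u := fun h => by rw [h, hu0] at hw2; omega
        exact ⟨w, adj_del.mpr ⟨hwa, fun h => hwu h.1, fun h => hzu h.2⟩, hw2⟩
      · intro z hzp
        right
        obtain ⟨w, hwa, hwp⟩ := h1 z hzp
        have hwu : w ≠ u := fun h => by rw [h, hu0] at hwp; omega
        have hzu : z ≠ u := fun h => by rw [h, hu0] at hzp; omega
        exact ⟨w, adj_del.mpr ⟨hwa, fun h => hwu h.1, fun h => hzu h.2⟩, hwp⟩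
      · exact ⟨x, adj_del.mpr ⟨hxa, fun h => hxa.ne h.1, fun h => hxv h.1⟩, hfp⟩
    have hsum := sum_update (f := f) hu0
    have := crit_bound hcrit hupd
    omega

lemma dichot_aux2 {G : SimpleGraph V} [Fintype V] {f : V → ℕ} {u v a : V}
    (hf : IsTRDF G f) (hfw : ∑ w, f w = gammaTR G) (huv : G.Adj u v)
    (hdv : 2 ≤ degreeN G v)
    (hcrit : gammaTR G + 2 ≤ gammaTR (deleteEdge G u v))
    (hup : 0 < f u) (hvp : 0 < f v)
    (hau : G.Adj a u) (hap : 0 < f a) (hav : a ≠ v) : False := by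
  classical
  obtain ⟨hb, h0, h1⟩ := hf
  by_cases hexv : ∃ b, G.Adj b v ∧ 0 < f b ∧ b ≠ u
  · obtain ⟨b, hba, hbp, hbu⟩ := hexv
    have hun : IsTRDF (deleteEdge G u v) f :=
      isTRDF_deleteEdge ⟨hb, h0, h1⟩ (fun h => absurd h (by omega))
        (fun h => absurd h (by omega))
        (fun _ => ⟨a, hav, hau, hap⟩) (fun _ => ⟨b, hbu, hba, hbp⟩)
    have := crit_bound hcrit hun
    omega
  · push_neg at hexv
    obtain ⟨x, hvx, hxu⟩ := exists_other_nbr hdv huv.symm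
    have hx0 : f x = 0 := by
      by_contra hxp
      exact hxu (hexv x hvx.symm (Nat.pos_of_ne_zero hxp))
    have hupd : IsTRDF (deleteEdge G u v) (Function.update f x 1) := by
      apply isTRDF_update hb hx0
      · intro z hzx hz
        obtain ⟨w, hwa, hw2⟩ := h0 z hz
        have hzu : z ≠ u := fun h => by rw [h] at hz; omega
        have hzv : z ≠ v := fun h => by rw [h] at hz; omega
        exact ⟨w, adj_del.mpr ⟨hwa, fun h => hzv h.2, fun h => hzu h.2⟩, hw2⟩
      · intro z hzp
        by_cases hzv : z = v
        · left
          rw [hzv]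
          exact adj_del.mpr ⟨hvx.symm, fun h => hxu h.1, fun h => hvx.ne h.1.symm⟩
        by_cases hzu : z = u
        · right
          exact ⟨a, adj_del.mpr ⟨by rw [hzu]; exact hau, fun h => hau.ne h.1,
            fun h => hav h.1⟩, hap⟩
        · right
          obtain ⟨w, hwa, hwp⟩ := h1 z hzp
          exact ⟨w, adj_del.mpr ⟨hwa, fun h => hzv h.2, fun h => hzu h.2⟩, hwp⟩
      · exact ⟨v, adj_del.mpr ⟨hvx, fun h => huv.ne h.1.symm, fun h => hxu h.2⟩, hvp⟩
    have hsum := sum_update (f := f) hx0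
    have := crit_bound hcrit hupd
    omega

lemma dichot {G : SimpleGraph V} [Fintype V] {f : V → ℕ} {u v : V}
    (hf : IsTRDF G f) (hfw : ∑ w, f w = gammaTR G) (huv : G.Adj u v)
    (hdu : 2 ≤ degreeN G u) (hdv : 2 ≤ degreeN G v)
    (hcrit : gammaTR G + 2 ≤ gammaTR (deleteEdge G u v)) :
    (0 < f u ∧ 0 < f v ∧ (∀ w, G.Adj w u → 0 < f w → w = v) ∧
      (∀ w, G.Adj w v → 0 < f w → w = u)) ∨
    (f u = 2 ∧ f v = 0 ∧ ∀ w, G.Adj w v → w ≠ u → f w = 0) ∨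
    (f v = 2 ∧ f u = 0 ∧ ∀ w, G.Adj w u → w ≠ v → f w = 0) := by
  have hcomm : gammaTR G + 2 ≤ gammaTR (deleteEdge G v u) := by
    rw [← deleteEdge_comm]; exact hcrit
  rcases Nat.eq_zero_or_pos (f u) with hu0 | hup
  · rcases Nat.eq_zero_or_pos (f v) with hv0 | hvp
    · exact absurd (zero_zero hf hfw huv hcrit hu0 hv0) id
    · right; right
      obtain ⟨h2, hall⟩ := dichot_aux hf hfw huv hcrit hu0 hvp
      exact ⟨h2, hu0, hall⟩
  · rcases Nat.eq_zero_or_pos (f v) with hv0 | hvp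
    · right; left
      obtain ⟨h2, hall⟩ := dichot_aux hf hfw huv.symm hcomm hv0 hup
      exact ⟨h2, hv0, hall⟩
    · left
      refine ⟨hup, hvp, ?_, ?_⟩
      · intro w hwa hwp
        by_contra hwv
        exact dichot_aux2 hf hfw huv hdv hcrit hup hvp hwa hwp hwv
      · intro w hwa hwp
        by_contra hwu
        exact dichot_aux2 hf hfw huv.symm hdu hcomm hvp hup hwa hwp hwu

lemma zero_edge {G : SimpleGraph V} [Fintype V] (hiso : NoIsolated G)
    (hLHS : ∀ u v : V, G.Adj u v →
        degreeN G u = 1 ∨ degreeN G v = 1 ∨ gammaTR G + 2 ≤ gammaTR (deleteEdge G u v))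
    {f : V → ℕ} (hf : IsTRDF G f) (hfw : ∑ w, f w = gammaTR G)
    {a b : V} (hab : G.Adj a b) (ha : f a = 0) (hb : f b = 0) : False := by
  obtain ⟨hB, h0, h1⟩ := hf
  rcases hLHS a b hab with h1d | h1d | hcrit
  · obtain ⟨w, hwa, hw2⟩ := h0 a ha
    have hwb := degree_one_unique h1d hab hwa.symm
    rw [hwb, hb] at hw2; omega
  · obtain ⟨w, hwa, hw2⟩ := h0 b hb
    have hwa' := degree_one_unique h1d hab.symm hwa.symm
    rw [hwa', ha] at hw2; omega
  · exact zero_zero ⟨hB, h0, h1⟩ hfw hab hcrit ha hb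

lemma side_bound {H : SimpleGraph V} [Fintype V] {g : V → ℕ} (hg : IsTRDF H g)
    {S : Finset V} {c x₁ x₂ : V} (hc : c ∈ S) (hx1 : x₁ ∈ S) (hx2 : x₂ ∈ S)
    (h12 : x₁ ≠ x₂) (h1c : x₁ ≠ c) (h2c : x₂ ≠ c)
    (hN1 : ∀ w, H.Adj w x₁ → w = c)
    (hN2 : ∀ w, H.Adj w x₂ → w = c)
    (hNc : ∀ w, H.Adj w c → w ∈ S ∧ w ≠ c) :
    3 ≤ ∑ v ∈ S, g v := by
  obtain ⟨hb, h0, h1⟩ := hg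
  by_cases hg1 : g x₁ = 0
  · obtain ⟨w, hwa, hw2⟩ := h0 _ hg1
    rw [hN1 _ hwa] at hw2
    obtain ⟨t, hta, htp⟩ := h1 c (by omega)
    obtain ⟨htS, htc⟩ := hNc _ hta
    have := sum_pair_le (g := g) htc.symm hc htS
    omega
  by_cases hg2 : g x₂ = 0
  · obtain ⟨w, hwa, hw2⟩ := h0 _ hg2
    rw [hN2 _ hwa] at hw2
    obtain ⟨t, hta, htp⟩ := h1 c (by omega)
    obtain ⟨htS, htc⟩ := hNc _ hta
    have := sum_pair_le (g := g) htc.symm hc htS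
    omega
  by_cases hgc : g c = 0
  · obtain ⟨w, hwa, hw2⟩ := h0 _ hgc
    obtain ⟨hwS, hwc⟩ := hNc _ hwa
    by_cases hw1 : w = x₁
    · have := sum_pair_le (g := g) h12 hx1 hx2
      rw [hw1] at hw2; omega
    by_cases hw2' : w = x₂
    · have := sum_pair_le (g := g) h12 hx1 hx2
      rw [hw2'] at hw2; omega
    · have := sum_triple_le (g := g) hw1 hw2' h12 hwS hx1 hx2
      omega
  · have := sum_triple_le (g := g) h12 h1c h2c hx1 hx2 hc
    omega

lemma star_case {G : SimpleGraph V} [Fintype V] (hconn : G.Connected)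
    (hstar : ∀ a b, G.Adj a b → degreeN G a = 1 ∨ degreeN G b = 1)
    {p : V} (h2 : 2 ≤ degreeN G p) :
    ∃ c : V, (∃ v : V, v ≠ c) ∧ ∀ v : V, v ≠ c → G.Adj c v ∧ degreeN G v = 1 := by
  have hleaf : ∀ x, G.Adj p x → degreeN G x = 1 := by
    intro x hx
    rcases hstar p x hx with h | h
    · omega
    · exact h
  have hcl : ∀ a ∈ {a | a = p ∨ G.Adj p a}, ∀ b, G.Adj a b → b ∈ {a | a = p ∨ G.Adj p a} := by
    intro a ha b hab
    rcases ha with rfl | ha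
    · exact Or.inr hab
    · exact Or.inl (degree_one_unique (hleaf a ha) ha.symm hab)
  have huniv := eq_univ_of_closed hconn _ (Or.inl rfl) hcl
  obtain ⟨q, hq⟩ := (Set.ncard_pos (Set.toFinite _)).mp
    (show 0 < degreeN G p by omega)
  refine ⟨p, ⟨q, hq.ne'⟩, ?_⟩
  intro v hv
  rcases huniv v with rfl | hv'
  · exact absurd rfl hv
  · exact ⟨hv', hleaf v hv'⟩

lemma ds_deg2 {G : SimpleGraph V} [Fintype V] {c d : V} (hadj : G.Adj c d)
    (hdc : degreeN G c = 2) (hdd : 2 ≤ degreeN G d)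
    (hstruct : ∀ v : V, v ≠ c → v ≠ d → degreeN G v = 1 ∧ (G.Adj c v ∨ G.Adj d v))
    (hG4 : gammaTR G = 4)
    (hcrit : gammaTR G + 2 ≤ gammaTR (deleteEdge G c d)) : False := by
  classical
  have hcd : c ≠ d := hadj.ne
  obtain ⟨x, hcx, hxd⟩ := exists_other_nbr (by omega) hadj
  obtain ⟨y, hdy, hyc⟩ := exists_other_nbr hdd hadj.symm
  have hxc : x ≠ c := hcx.ne'
  have hyd : y ≠ d := hdy.ne'
  have hxy : x ≠ y := by
    intro h
    have h1 := (hstruct x hxc hxd).1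
    exact hcd ((degree_one_unique h1 hcx.symm (h ▸ hdy.symm : G.Adj x d)).symm)
  set g : V → ℕ := fun z => if z = d then 2 else if z = c then 1 else
    if z = x then 1 else if z = y then 1 else 0 with hgdef
  have hgd : g d = 2 := by simp [hgdef]
  have hgc : g c = 1 := by simp [hgdef, hcd]
  have hgx : g x = 1 := by simp [hgdef, hxd, hxc]
  have hgy : g y = 1 := by simp [hgdef, hyd, hyc, (Ne.symm hxy)]
  have hg0 : ∀ z, z ≠ d → z ≠ c → z ≠ x → z ≠ y → g z = 0 := by
    intro z h1 h2 h3 h4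
    simp [hgdef, h1, h2, h3, h4]
  have hgTRDF : IsTRDF (deleteEdge G c d) g := by
    refine ⟨?_, ?_, ?_⟩
    · intro z
      by_cases h1 : z = d
      · rw [h1, hgd]
      by_cases h2 : z = c
      · rw [h2, hgc]; omega
      by_cases h3 : z = x
      · rw [h3, hgx]; omega
      by_cases h4 : z = y
      · rw [h4, hgy]; omega
      · rw [hg0 z h1 h2 h3 h4]; omega
    · intro z hz
      have h1 : z ≠ d := by intro h; rw [h, hgd] at hz; omega
      have h2 : z ≠ c := by intro h; rw [h, hgc] at hz; omega
      have h3 : z ≠ x := by intro h; rw [h, hgx] at hz; omega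
      have h4 : z ≠ y := by intro h; rw [h, hgy] at hz; omega
      have hzd : G.Adj d z := by
        rcases (hstruct z h2 h1).2 with h | h
        · exact absurd (nbr_cases_of_degree_two hdc hadj hcx (Ne.symm hxd) h)
            (by push_neg; exact ⟨h1, h3⟩)
        · exact h
      exact ⟨d, adj_del.mpr ⟨hzd, fun h => hcd h.1.symm, fun h => h2 h.2⟩, hgd⟩
    · intro z hz
      by_cases h1 : z = d
      · refine ⟨y, adj_del.mpr ⟨by rw [h1]; exact hdy.symm, fun h => hyc h.1,
          fun h => hyd h.1⟩, by rw [hgy]; omega⟩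
      by_cases h2 : z = c
      · refine ⟨x, adj_del.mpr ⟨by rw [h2]; exact hcx.symm, fun h => hxc h.1,
          fun h => hxd h.1⟩, by rw [hgx]; omega⟩
      by_cases h3 : z = x
      · refine ⟨c, adj_del.mpr ⟨by rw [h3]; exact hcx, fun h => hxd (h3.symm.trans h.2),
          fun h => hcd h.1⟩, by rw [hgc]; omega⟩
      by_cases h4 : z = y
      · refine ⟨d, adj_del.mpr ⟨by rw [h4]; exact hdy, fun h => hcd h.1.symm,
          fun h => hyc (h4.symm.trans h.2)⟩, by rw [hgd]; omega⟩
      · rw [hg0 z h1 h2 h3 h4] at hz; omega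
  have hsum : ∑ v, g v = 5 := by
    rw [sum_eq_four (Ne.symm hcd) (fun h => hxd h.symm) (Ne.symm hyd)
      (Ne.symm hxc) (Ne.symm hyc) hxy
      (fun v h1 h2 h3 h4 => hg0 v h1 h2 h3 h4), hgd, hgc, hgx, hgy]
  have := crit_bound hcrit hgTRDF
  omega

lemma ds_crit {G : SimpleGraph V} [Fintype V] {c d : V} (hcd : c ≠ d) (hadj : G.Adj c d)
    (h3c : 3 ≤ degreeN G c) (h3d : 3 ≤ degreeN G d)
    (hstruct : ∀ v : V, v ≠ c → v ≠ d → degreeN G v = 1 ∧ (G.Adj c v ∨ G.Adj d v)) :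
    gammaTR G + 2 ≤ gammaTR (deleteEdge G c d) := by
  classical
  obtain ⟨x₁, x₂, hcx1, hcx2, h12, h1d, h2d⟩ := exists_two_other h3c hadj
  obtain ⟨y₁, y₂, hdy1, hdy2, h12', h1c, h2c⟩ := exists_two_other h3d hadj.symm
  have hx1c : x₁ ≠ c := hcx1.ne'
  have hx2c : x₂ ≠ c := hcx2.ne'
  have hy1d : y₁ ≠ d := hdy1.ne'
  have hy2d : y₂ ≠ d := hdy2.ne'
  -- unique-neighbour facts for leaves
  have hleafc : ∀ v, v ≠ c → v ≠ d → G.Adj c v → ∀ w, G.Adj w v → w = c := by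
    intro v hvc hvd hcv w hwv
    exact degree_one_unique (hstruct v hvc hvd).1 hcv.symm hwv.symm
  have hleafd : ∀ v, v ≠ c → v ≠ d → G.Adj d v → ∀ w, G.Adj w v → w = d := by
    intro v hvc hvd hdv w hwv
    exact degree_one_unique (hstruct v hvc hvd).1 hdv.symm hwv.symm
  have hG4 : gammaTR G ≤ 4 := by
    set F : V → ℕ := fun z => if z = c ∨ z = d then 2 else 0 with hF
    have hf : IsTRDF G F := by
      refine ⟨?_, ?_, ?_⟩
      · intro z; rw [hF]; dsimp only; split <;> omega
      · intro z hz
        have hzc : z ≠ c := by intro h; simp [hF, h] at hz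
        have hzd : z ≠ d := by intro h; simp [hF, h] at hz
        rcases (hstruct z hzc hzd).2 with h | h
        · exact ⟨c, h, by simp [hF]⟩
        · exact ⟨d, h, by simp [hF]⟩
      · intro z hz
        have hor : z = c ∨ z = d := by
          by_contra h; push_neg at h; simp [hF, h.1, h.2] at hz
        rcases hor with rfl | rfl
        · exact ⟨d, hadj.symm, by simp [hF]⟩
        · exact ⟨c, hadj, by simp [hF]⟩
    have hle := gammaTR_le hf
    have hsum : ∑ v, F v = 4 := by
      rw [sum_eq_pair hcd (fun v hc hd => by simp [hF, hc, hd])]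
      simp [hF, hcd]
    omega
  have hHiso : NoIsolated (deleteEdge G c d) := by
    intro z
    by_cases hzc : z = c
    · exact ⟨x₁, adj_del.mpr ⟨by rw [hzc]; exact hcx1.symm,
        fun h => hcx1.ne h.1.symm, fun h => h1d h.1⟩⟩
    by_cases hzd : z = d
    · exact ⟨y₁, adj_del.mpr ⟨by rw [hzd]; exact hdy1.symm,
        fun h => h1c h.1, fun h => hdy1.ne h.1.symm⟩⟩
    · rcases (hstruct z hzc hzd).2 with h | h
      · exact ⟨c, adj_del.mpr ⟨h, fun hh => hzd hh.2, fun hh => hcd hh.1⟩⟩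
      · exact ⟨d, adj_del.mpr ⟨h, fun hh => hcd hh.1.symm, fun hh => hzc hh.2⟩⟩
  have h6 : 6 ≤ gammaTR (deleteEdge G c d) := by
    apply le_gammaTR hHiso
    intro g hg
    classical
    set A : Finset V := Finset.univ.filter (fun v => v = c ∨ (G.Adj c v ∧ v ≠ d)) with hA
    have hsplit : ∑ v ∈ A, g v + ∑ v ∈ Aᶜ, g v = ∑ v, g v :=
      Finset.sum_add_sum_compl A g
    have hside1 : 3 ≤ ∑ v ∈ A, g v := by
      refine side_bound hg ?_ ?_ ?_ h12 hx1c hx2c ?_ ?_ ?_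
      · rw [hA]; simp
      · rw [hA]; simp only [Finset.mem_filter, Finset.mem_univ, true_and]
        exact Or.inr ⟨hcx1, h1d⟩
      · rw [hA]; simp only [Finset.mem_filter, Finset.mem_univ, true_and]
        exact Or.inr ⟨hcx2, h2d⟩
      · intro w hw
        exact hleafc x₁ hx1c h1d hcx1 w (adj_del.mp hw).1
      · intro w hw
        exact hleafc x₂ hx2c h2d hcx2 w (adj_del.mp hw).1
      · intro w hw
        obtain ⟨hwG, hn1, hn2⟩ := adj_del.mp hw
        have hwd : w ≠ d := fun h => hn2 ⟨h, rfl⟩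
        refine ⟨?_, hwG.ne⟩
        rw [hA]; simp only [Finset.mem_filter, Finset.mem_univ, true_and]
        exact Or.inr ⟨hwG.symm, hwd⟩
    have hside2 : 3 ≤ ∑ v ∈ Aᶜ, g v := by
      have hy1A : y₁ ∈ Aᶜ := by
        rw [hA]
        simp only [Finset.mem_compl, Finset.mem_filter, Finset.mem_univ, true_and]
        push_neg
        refine ⟨h1c, fun hcy => absurd (hleafd y₁ h1c hy1d hdy1 c hcy) hcd⟩
      have hy2A : y₂ ∈ Aᶜ := by
        rw [hA]
        simp only [Finset.mem_compl, Finset.mem_filter, Finset.mem_univ, true_and]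
        push_neg
        refine ⟨h2c, fun hcy => absurd (hleafd y₂ h2c hy2d hdy2 c hcy) hcd⟩
      have hdA : d ∈ Aᶜ := by
        rw [hA]
        simp only [Finset.mem_compl, Finset.mem_filter, Finset.mem_univ, true_and]
        push_neg
        exact ⟨Ne.symm hcd, fun _ => rfl⟩
      refine side_bound hg hdA hy1A hy2A h12' hy1d hy2d ?_ ?_ ?_
      · intro w hw
        exact hleafd y₁ h1c hy1d hdy1 w (adj_del.mp hw).1
      · intro w hw
        exact hleafd y₂ h2c hy2d hdy2 w (adj_del.mp hw).1
      · intro w hw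
        obtain ⟨hwG, hn1, hn2⟩ := adj_del.mp hw
        have hwc : w ≠ c := fun h => hn1 ⟨h, rfl⟩
        refine ⟨?_, hwG.ne⟩
        rw [hA]
        simp only [Finset.mem_compl, Finset.mem_filter, Finset.mem_univ, true_and]
        push_neg
        refine ⟨hwc, fun hcw => ?_⟩
        by_contra hwd
        exact hcd (hleafd w hwc hwd hwG.symm c hcw)
    omega
  omega

theorem stmt17 (G : SimpleGraph V) [Fintype V] (hconn : G.Connected)
    (hiso : NoIsolated G) :
    (∀ u v : V, G.Adj u v →
        degreeN G u = 1 ∨ degreeN G v = 1 ∨ gammaTR G + 2 ≤ gammaTR (deleteEdge G u v)) ↔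
      (∃ c : V, (∃ v : V, v ≠ c) ∧ ∀ v : V, v ≠ c → G.Adj c v ∧ degreeN G v = 1) ∨
        (∃ c d : V, c ≠ d ∧ G.Adj c d ∧ 3 ≤ degreeN G c ∧ 3 ≤ degreeN G d ∧
          ∀ v : V, v ≠ c → v ≠ d → degreeN G v = 1 ∧ (G.Adj c v ∨ G.Adj d v)) := by
  constructor
  · intro hLHS
    by_cases hallstar : ∀ a b, G.Adj a b → degreeN G a = 1 ∨ degreeN G b = 1
    · left
      obtain ⟨p⟩ := hconn.nonempty
      obtain ⟨q, hq⟩ := hiso p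
      by_cases h2p : 2 ≤ degreeN G p
      · exact star_case hconn hallstar h2p
      by_cases h2q : 2 ≤ degreeN G q
      · exact star_case hconn hallstar h2q
      · have hp1 : degreeN G p = 1 := by have := one_le_degree hq.symm; omega
        have hq1 : degreeN G q = 1 := by have := one_le_degree hq; omega
        have hcl : ∀ a ∈ {a | a = p ∨ a = q}, ∀ b, G.Adj a b → b ∈ {a | a = p ∨ a = q} := by
          intro a ha b hab
          rcases ha with rfl | rfl
          · exact Or.inr (degree_one_unique hp1 hq.symm hab)
          · exact Or.inl (degree_one_unique hq1 hq hab)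
        have huniv := eq_univ_of_closed hconn _ (Or.inl rfl) hcl
        refine ⟨p, ⟨q, hq.ne⟩, ?_⟩
        intro v hv
        rcases huniv v with rfl | rfl
        · exact absurd rfl hv
        · exact ⟨hq.symm, hq1⟩
    · right
      push_neg at hallstar
      obtain ⟨c, d, hadj, hc1, hd1⟩ := hallstar
      have hdc : 2 ≤ degreeN G c := two_le_degree_of_not_one hiso hc1
      have hdd : 2 ≤ degreeN G d := two_le_degree_of_not_one hiso hd1
      have hcrit : gammaTR G + 2 ≤ gammaTR (deleteEdge G c d) :=
        ((hLHS c d hadj).resolve_left hc1).resolve_left hd1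
      obtain ⟨f, hf, hfw⟩ := exists_gammaTR hiso
      rcases dichot hf hfw hadj hdc hdd hcrit with
        ⟨hcp, hdp, hPc, hPd⟩ | ⟨h2, h0, hall⟩ | ⟨h2, h0, hall⟩
      · -- S2 main case
        have hnbrc : ∀ x, G.Adj c x → x ≠ d → f x = 0 ∧ degreeN G x = 1 := by
          intro x hcx hxd
          have hx0 : f x = 0 := by
            by_contra h
            exact hxd (hPc x hcx.symm (Nat.pos_of_ne_zero h))
          refine ⟨hx0, ?_⟩
          by_contra hx1
          have hdx : 2 ≤ degreeN G x := two_le_degree_of_not_one hiso hx1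
          have hcritx : gammaTR G + 2 ≤ gammaTR (deleteEdge G c x) :=
            ((hLHS c x hcx).resolve_left hc1).resolve_left hx1
          rcases dichot hf hfw hcx hdc hdx hcritx with
            ⟨_, hxp, _, _⟩ | ⟨hc2, hx0', hallx⟩ | ⟨hx2, _, _⟩
          · omega
          · obtain ⟨y, hxy, hyc⟩ := exists_other_nbr hdx hcx.symm
            have hy0 : f y = 0 := hallx y hxy.symm hyc
            exact zero_edge hiso hLHS ⟨hf.1, hf.2.1, hf.2.2⟩ hfw hxy hx0 hy0
          · omega
        have hnbrd : ∀ x, G.Adj d x → x ≠ c → f x = 0 ∧ degreeN G x = 1 := by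
          intro x hdx hxc
          have hx0 : f x = 0 := by
            by_contra h
            exact hxc (hPd x hdx.symm (Nat.pos_of_ne_zero h))
          refine ⟨hx0, ?_⟩
          by_contra hx1
          have hdx2 : 2 ≤ degreeN G x := two_le_degree_of_not_one hiso hx1
          have hcritx : gammaTR G + 2 ≤ gammaTR (deleteEdge G d x) :=
            ((hLHS d x hdx).resolve_left hd1).resolve_left hx1
          rcases dichot hf hfw hdx hdd hdx2 hcritx with
            ⟨_, hxp, _, _⟩ | ⟨hd2, hx0', hallx⟩ | ⟨hx2, _, _⟩
          · omega
          · obtain ⟨y, hxy, hyc⟩ := exists_other_nbr hdx2 hdx.symm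
            have hy0 : f y = 0 := hallx y hxy.symm hyc
            exact zero_edge hiso hLHS ⟨hf.1, hf.2.1, hf.2.2⟩ hfw hxy hx0 hy0
          · omega
        obtain ⟨x₀, hcx₀, hx₀d⟩ := exists_other_nbr hdc hadj
        obtain ⟨hx₀0, hx₀1⟩ := hnbrc x₀ hcx₀ hx₀d
        have hfc2 : f c = 2 := by
          obtain ⟨w, hwx, hw2⟩ := hf.2.1 x₀ hx₀0
          have hwc := degree_one_unique hx₀1 hcx₀.symm hwx.symm
          rwa [hwc] at hw2
        obtain ⟨y₀, hdy₀, hy₀c⟩ := exists_other_nbr hdd hadj.symm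
        obtain ⟨hy₀0, hy₀1⟩ := hnbrd y₀ hdy₀ hy₀c
        have hfd2 : f d = 2 := by
          obtain ⟨w, hwy, hw2⟩ := hf.2.1 y₀ hy₀0
          have hwd := degree_one_unique hy₀1 hdy₀.symm hwy.symm
          rwa [hwd] at hw2
        have hcl : ∀ a ∈ {a | a = c ∨ a = d ∨ G.Adj c a ∨ G.Adj d a}, ∀ b, G.Adj a b →
            b ∈ {a | a = c ∨ a = d ∨ G.Adj c a ∨ G.Adj d a} := by
          intro a ha b hab
          rcases ha with rfl | rfl | ha | ha
          · exact Or.inr (Or.inr (Or.inl hab))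
          · exact Or.inr (Or.inr (Or.inr hab))
          · by_cases had : a = d
            · exact Or.inr (Or.inr (Or.inr (had ▸ hab)))
            · exact Or.inl (degree_one_unique (hnbrc a ha had).2 ha.symm hab)
          · by_cases hac : a = c
            · exact Or.inr (Or.inr (Or.inl (hac ▸ hab)))
            · exact Or.inr (Or.inl (degree_one_unique (hnbrd a ha hac).2 ha.symm hab))
        have huniv := eq_univ_of_closed hconn _ (Or.inl rfl) hcl
        have hstruct : ∀ v : V, v ≠ c → v ≠ d →
            degreeN G v = 1 ∧ (G.Adj c v ∨ G.Adj d v) := by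
          intro v hvc hvd
          rcases huniv v with rfl | rfl | h | h
          · exact absurd rfl hvc
          · exact absurd rfl hvd
          · exact ⟨(hnbrc v h hvd).2, Or.inl h⟩
          · exact ⟨(hnbrd v h hvc).2, Or.inr h⟩
        have hz : ∀ v, v ≠ c → v ≠ d → f v = 0 := by
          intro v hvc hvd
          rcases huniv v with rfl | rfl | h | h
          · exact absurd rfl hvc
          · exact absurd rfl hvd
          · exact (hnbrc v h hvd).1
          · exact (hnbrd v h hvc).1
        have hsum4 : ∑ v, f v = 4 := by
          rw [sum_eq_pair hadj.ne hz, hfc2, hfd2]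
        have hG4 : gammaTR G = 4 := by rw [← hfw, hsum4]
        have h3c : 3 ≤ degreeN G c := by
          by_contra h
          exact ds_deg2 hadj (by omega) hdd hstruct hG4 hcrit
        have h3d : 3 ≤ degreeN G d := by
          by_contra h
          have hstruct' : ∀ v : V, v ≠ d → v ≠ c →
              degreeN G v = 1 ∧ (G.Adj d v ∨ G.Adj c v) := by
            intro v h1 h2
            exact ⟨(hstruct v h2 h1).1, (hstruct v h2 h1).2.symm⟩
          have hcrit' : gammaTR G + 2 ≤ gammaTR (deleteEdge G d c) := by
            rw [deleteEdge_comm (u := d) (v := c)]; exact hcrit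
          exact ds_deg2 hadj.symm (by omega) hdc hstruct' hG4 hcrit'
        exact ⟨c, d, hadj.ne, hadj, h3c, h3d, hstruct⟩
      · -- f c = 2, f d = 0 : impossible
        obtain ⟨y, hdy, hyc⟩ := exists_other_nbr hdd hadj.symm
        have hy0 : f y = 0 := hall y hdy.symm hyc
        exact absurd (zero_edge hiso hLHS ⟨hf.1, hf.2.1, hf.2.2⟩ hfw hdy h0 hy0) id
      · -- f d = 2, f c = 0 : impossible
        obtain ⟨y, hcy, hyd⟩ := exists_other_nbr hdc hadj
        have hy0 : f y = 0 := hall y hcy.symm hyd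
        exact absurd (zero_edge hiso hLHS ⟨hf.1, hf.2.1, hf.2.2⟩ hfw hcy h0 hy0) id
  · rintro (⟨c, ⟨w₀, hw₀⟩, hstar⟩ | ⟨c, d, hcd, hadj, h3c, h3d, hstruct⟩) <;> intro u v huv
    · by_cases hvc : v = c
      · exact Or.inl (hstar u (fun h => huv.ne (h.trans hvc.symm))).2
      · exact Or.inr (Or.inl (hstar v hvc).2)
    · by_cases huc : u = c
      · by_cases hvd : v = d
        · right; right
          rw [huc, hvd]
          exact ds_crit hcd hadj h3c h3d hstruct
        · have hvc : v ≠ c := fun h => huv.ne (huc.trans h.symm)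
          exact Or.inr (Or.inl (hstruct v hvc hvd).1)
      · by_cases hud : u = d
        · by_cases hvc : v = c
          · right; right
            rw [hud, hvc, deleteEdge_comm (u := d) (v := c)]
            exact ds_crit hcd hadj h3c h3d hstruct
          · have hvd : v ≠ d := fun h => huv.ne (hud.trans h.symm)
            exact Or.inr (Or.inl (hstruct v hvc hvd).1)
        · exact Or.inl (hstruct u huc hud).1
end
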